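/- Let Σ be an alphabet and α ∈ ℕ⁺ a pattern in which every variable occurs at least twice. Let σ : ℕ* → Σ* be a 1-uniform morphism such that every length-2 factor of σ(α) occurs in σ(α) exactly once. Then σ is unambiguous with respect to α: every morphism τ : ℕ* → Σ* with τ(α) = σ(α) satisfies τ(x) = σ(x) for all variables x occurring in α. -/

import Mathlib

private lemma split2_aux {x : ℕ} : ∀ {α : List ℕ}, 2 ≤ α.count x →
    ∃ a b c : List ℕ, α = a ++ x :: (b ++ x :: c) := by
  intro α h
  induction α with
  | nil => simp at h
  | cons z t ih =>
    by_cases hzx : z = x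
    · rw [hzx, List.count_cons_self] at h
      have hx : x ∈ t := List.count_pos_iff.mp (by omega)
      obtain ⟨b, c, ht⟩ := List.append_of_mem hx
      exact ⟨[], b, c, by simp [ht, hzx]⟩
    · rw [List.count_cons_of_ne hzx] at h
      obtain ⟨a, b, c, ht⟩ := ih h
      exact ⟨z :: a, b, c, by simp [ht]⟩

private lemma sum_map_one (l : List ℕ) : (List.map (fun _ => (1 : ℕ)) l).sum = l.length := by
  induction l with
  | nil => rfl
  | cons z t ih => rw [List.map_cons, List.sum_cons, List.length_cons, ih]; omega

/-- Let α ∈ ℕ⁺ be a pattern in which every variable occurs at least twice,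
and let σ : ℕ* → Σ* be a 1-uniform morphism such that every length-2 factor
of σ(α) occurs in σ(α) exactly once (all length-2 factors at distinct
positions are distinct). Then σ is unambiguous with respect to α. -/
theorem stmt_13 (S : Type*) (α : List ℕ) (hα : α ≠ [])
    (hcount : ∀ x ∈ α, 2 ≤ α.count x)
    (σ : ℕ → List S) (h1 : ∀ x, (σ x).length = 1)
    (hfac : ∀ p q : ℕ, p + 2 ≤ (α.flatMap σ).length →
      q + 2 ≤ (α.flatMap σ).length →
      ((α.flatMap σ).drop p).take 2 = ((α.flatMap σ).drop q).take 2 →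
      p = q) :
    ∀ τ : ℕ → List S,
      α.flatMap τ = α.flatMap σ → ∀ x ∈ α, τ x = σ x := by
  intro τ heq
  -- Step 1: no variable of α has a τ-image of length ≥ 2.
  have hle1 : ∀ y ∈ α, (τ y).length ≤ 1 := by
    intro y hy
    by_contra hlt
    push_neg at hlt
    have h2 : 2 ≤ (τ y).length := hlt
    obtain ⟨a, b, c, hsplit⟩ := split2_aux (hcount y hy)
    have hw : α.flatMap σ
        = a.flatMap τ ++ (τ y ++ (b.flatMap τ ++ (τ y ++ c.flatMap τ))) := by
      rw [← heq, hsplit]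
      simp only [List.flatMap_append, List.flatMap_cons, List.append_assoc]
    have d1 : (α.flatMap σ).drop (a.flatMap τ).length
        = τ y ++ (b.flatMap τ ++ (τ y ++ c.flatMap τ)) := by
      rw [hw]; exact List.drop_left
    have d2 : (α.flatMap σ).drop ((a.flatMap τ).length + (τ y).length + (b.flatMap τ).length)
        = τ y ++ c.flatMap τ := by
      have hw2 : α.flatMap σ = (a.flatMap τ ++ τ y ++ b.flatMap τ) ++ (τ y ++ c.flatMap τ) := by
        rw [hw]; simp only [List.append_assoc]
      have hlq : (a.flatMap τ ++ τ y ++ b.flatMap τ).length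
          = (a.flatMap τ).length + (τ y).length + (b.flatMap τ).length := by
        simp only [List.length_append]
      rw [hw2, ← hlq]
      exact List.drop_left
    have hwl : (a.flatMap τ).length + (τ y).length + (b.flatMap τ).length + (τ y).length
        + (c.flatMap τ).length = (α.flatMap σ).length := by
      rw [hw]; simp only [List.length_append]; omega
    have hb1 : (a.flatMap τ).length + 2 ≤ (α.flatMap σ).length := by omega
    have hb2 : (a.flatMap τ).length + (τ y).length + (b.flatMap τ).length + 2
        ≤ (α.flatMap σ).length := by omega
    have htk := hfac _ _ hb1 hb2 (by
      rw [d1, d2, List.take_append_of_le_length h2, List.take_append_of_le_length h2])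
    omega
  -- length of σ-image
  have hlenσ : ∀ l : List ℕ, (l.flatMap σ).length = l.length := by
    intro l
    rw [List.length_flatMap]
    have hm : List.map (fun a => (σ a).length) l = List.map (fun _ => 1) l :=
      List.map_congr_left (fun y _ => by simp [h1])
    rw [hm, sum_map_one]
  -- Step 2: every variable of α has τ-image of length exactly 1.
  have hsum : (List.map (List.length ∘ τ) α).sum = α.length := by
    rw [show List.length ∘ τ = fun a => (τ a).length from rfl, ← List.length_flatMap, heq, hlenσ]
  have heq1 : ∀ y ∈ α, (τ y).length = 1 := by
    intro y hy
    by_contra hne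
    have h0 : (τ y).length = 0 := by have := hle1 y hy; omega
    obtain ⟨a, b, hsplit⟩ := List.append_of_mem hy
    have hsa : (List.map (List.length ∘ τ) a).sum ≤ a.length := by
      have h := List.sum_le_card_nsmul (List.map (List.length ∘ τ) a) 1 ?_
      · simpa using h
      · intro z hz
        obtain ⟨y', hy', rfl⟩ := List.mem_map.mp hz
        exact hle1 y' (by rw [hsplit]; simp [hy'])
    have hsb : (List.map (List.length ∘ τ) b).sum ≤ b.length := by
      have h := List.sum_le_card_nsmul (List.map (List.length ∘ τ) b) 1 ?_
      · simpa using h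
      · intro z hz
        obtain ⟨y', hy', rfl⟩ := List.mem_map.mp hz
        exact hle1 y' (by rw [hsplit]; simp [hy'])
    have hs : (List.map (List.length ∘ τ) a).sum + (τ y).length
        + (List.map (List.length ∘ τ) b).sum = α.length := by
      rw [← hsum, hsplit]
      simp only [List.map_append, List.map_cons, List.sum_append, List.sum_cons,
        Function.comp_apply]
      omega
    have hl : α.length = a.length + 1 + b.length := by
      rw [hsplit]; simp only [List.length_append, List.length_cons]; omega
    omega
  -- τ-image length of sublist of α consisting of variables of α
  have hlenτ : ∀ a : List ℕ, (∀ y ∈ a, y ∈ α) → (a.flatMap τ).length = a.length := by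
    intro a ha
    rw [List.length_flatMap]
    have hm : List.map (fun a => (τ a).length) a = List.map (fun _ => 1) a :=
      List.map_congr_left (fun y hy => by simp [heq1 y (ha y hy)])
    rw [hm, sum_map_one]
  -- Step 3: conclude τ x = σ x for each occurrence.
  intro x hx
  obtain ⟨a, b, hsplit⟩ := List.append_of_mem hx
  have hlaτ : (a.flatMap τ).length = a.length :=
    hlenτ a (fun y hy => by rw [hsplit]; simp [hy])
  have hlaσ : (a.flatMap σ).length = a.length := hlenσ a
  have hwτ : α.flatMap σ = a.flatMap τ ++ (τ x ++ b.flatMap τ) := by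
    rw [← heq, hsplit]
    simp only [List.flatMap_append, List.flatMap_cons, List.append_assoc]
  have hwσ : α.flatMap σ = a.flatMap σ ++ (σ x ++ b.flatMap σ) := by
    rw [hsplit]
    simp only [List.flatMap_append, List.flatMap_cons, List.append_assoc]
  have hdτ : (α.flatMap σ).drop a.length = τ x ++ b.flatMap τ := by
    rw [hwτ, ← hlaτ]; exact List.drop_left
  have hdσ : (α.flatMap σ).drop a.length = σ x ++ b.flatMap σ := by
    rw [hwσ, ← hlaσ]; exact List.drop_left
  have hτx1 : (τ x).length = 1 := heq1 x hx
  exact List.append_inj_left (hdτ.symm.trans hdσ) (by rw [hτx1, h1])
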